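/- Let X be a metric space and let ζ: [0,1] → X be a continuous curve with the property that for every point q ∈ X the preimage ζ⁻¹({q}) is an interval (i.e. whenever ζ(ξ₁) = ζ(ξ₂) and ξ₁ ≤ ξ ≤ ξ₂, then ζ(ξ) = ζ(ξ₁)). Then there exists an injective continuous curve ζ̃: [0,1] → X with ζ̃([0,1]) = ζ([0,1]), provided ζ is not constant; if ζ is constant its image is a single point. -/

import Mathlib

noncomputable section

open Set Metric

/-- elementary estimate: `x ↦ 1/(1+x)` is 1-Lipschitz on nonnegatives. -/
private lemma one_div_one_add_abs_le {p r : ℝ} (hp : 0 ≤ p) (hr : 0 ≤ r) :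
    |1 / (1 + p) - 1 / (1 + r)| ≤ |p - r| := by
  have h1 : (0:ℝ) < 1 + p := by linarith
  have h2 : (0:ℝ) < 1 + r := by linarith
  have heq : 1 / (1 + p) - 1 / (1 + r) = (r - p) / ((1 + p) * (1 + r)) := by
    field_simp
    ring
  rw [heq, abs_div, abs_of_pos (mul_pos h1 h2)]
  have hd1 : (1:ℝ) ≤ (1 + p) * (1 + r) := by nlinarith
  calc |r - p| / ((1 + p) * (1 + r)) ≤ |r - p| := div_le_self (abs_nonneg _) hd1
    _ = |p - r| := abs_sub_comm _ _

/-- **Injective reparametrization of a curve with interval preimages.** Let `X` be a metric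
space and `ζ : [0,1] → X` a continuous curve such that every point-preimage is an interval
(i.e. `ζ ξ₁ = ζ ξ₂` and `ξ₁ ≤ ξ ≤ ξ₂` imply `ζ ξ = ζ ξ₁`). If `ζ` is not constant on
`[0,1]`, then there is an injective continuous curve `ζ' : [0,1] → X` with
`ζ'([0,1]) = ζ([0,1])`; if `ζ` is constant on `[0,1]`, its image is a single point. -/
theorem injective_reparametrization_of_curve
    {X : Type*} [MetricSpace X] (ζ : ℝ → X)
    (hcont : ContinuousOn ζ (Set.Icc 0 1))
    (hpre : ∀ ξ₁ ξ₂ ξ : ℝ, ξ₁ ∈ Set.Icc (0 : ℝ) 1 → ξ₂ ∈ Set.Icc (0 : ℝ) 1 →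
      ξ₁ ≤ ξ → ξ ≤ ξ₂ → ζ ξ₁ = ζ ξ₂ → ζ ξ = ζ ξ₁) :
    ((¬ ∀ ξ₁ ∈ Set.Icc (0 : ℝ) 1, ∀ ξ₂ ∈ Set.Icc (0 : ℝ) 1, ζ ξ₁ = ζ ξ₂) →
      ∃ ζ' : ℝ → X, ContinuousOn ζ' (Set.Icc 0 1) ∧ Set.InjOn ζ' (Set.Icc 0 1) ∧
        ζ' '' Set.Icc 0 1 = ζ '' Set.Icc 0 1) ∧
    ((∀ ξ₁ ∈ Set.Icc (0 : ℝ) 1, ∀ ξ₂ ∈ Set.Icc (0 : ℝ) 1, ζ ξ₁ = ζ ξ₂) →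
      ∃ q : X, ζ '' Set.Icc 0 1 = {q}) := by
  have h01 : (0:ℝ) ∈ Set.Icc (0:ℝ) 1 := ⟨le_refl 0, zero_le_one⟩
  have h11 : (1:ℝ) ∈ Set.Icc (0:ℝ) 1 := ⟨zero_le_one, le_refl 1⟩
  constructor
  swap
  · intro h
    refine ⟨ζ 0, ?_⟩
    ext y
    simp only [mem_image, mem_singleton_iff]
    constructor
    · rintro ⟨t, ht, rfl⟩
      exact (h 0 h01 t ht).symm
    · rintro rfl
      exact ⟨0, h01, rfl⟩
  intro hnc
  -- ζ 0 ≠ ζ 1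
  have hζ01 : ζ 0 ≠ ζ 1 := by
    intro h
    apply hnc
    intro a ha b hb
    have hA : ζ a = ζ 0 := hpre 0 1 a h01 h11 ha.1 ha.2 h
    have hB : ζ b = ζ 0 := hpre 0 1 b h01 h11 hb.1 hb.2 h
    rw [hA, hB]
  -- equality of initial images along a fiber
  have himg : ∀ s t : ℝ, s ∈ Set.Icc (0:ℝ) 1 → t ∈ Set.Icc (0:ℝ) 1 → s ≤ t → ζ s = ζ t →
      ζ '' Set.Icc 0 s = ζ '' Set.Icc 0 t := by
    intro s t hs ht hst he
    refine Subset.antisymm (image_mono (Icc_subset_Icc_right hst)) ?_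
    rintro _ ⟨u, hu, rfl⟩
    rcases le_or_gt u s with h | h
    · exact ⟨u, ⟨hu.1, h⟩, rfl⟩
    · have : ζ u = ζ s := hpre s t u hs ht h.le hu.2 he
      exact ⟨s, ⟨hs.1, le_refl s⟩, this.symm⟩
  -- dense sequence in the interval
  obtain ⟨q, hq⟩ := TopologicalSpace.exists_dense_seq (Set.Icc (0:ℝ) 1)
  -- the comparison functions
  set F : ℕ → ℝ → ℝ := fun k t => infDist (ζ (q k : ℝ)) (ζ '' Set.Icc 0 t) with hF
  have hne : ∀ t : ℝ, t ∈ Set.Icc (0:ℝ) 1 → (ζ '' Set.Icc 0 t).Nonempty :=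
    fun t ht => ⟨ζ 0, 0, ⟨le_refl 0, ht.1⟩, rfl⟩
  have hcmp : ∀ t : ℝ, t ∈ Set.Icc (0:ℝ) 1 → IsCompact (ζ '' Set.Icc 0 t) :=
    fun t ht => isCompact_Icc.image_of_continuousOn (hcont.mono (Icc_subset_Icc_right ht.2))
  have hF0 : ∀ k t, 0 ≤ F k t := fun k t => infDist_nonneg
  have hFanti : ∀ k, ∀ s t : ℝ, s ∈ Set.Icc (0:ℝ) 1 → s ≤ t → F k t ≤ F k s := by
    intro k s t hs hst
    exact infDist_le_infDist_of_subset
      (image_mono (Icc_subset_Icc_right hst)) (hne s hs)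
  -- the summed function
  set term : ℝ → ℕ → ℝ := fun t k => (1/2)^k * (1 / (1 + F k t)) with hterm
  have htermpos : ∀ t k, 0 < term t k := by
    intro t k
    apply mul_pos (by positivity)
    have := hF0 k t
    positivity
  have htermle : ∀ t k, term t k ≤ (1/2)^k := by
    intro t k
    have h1 : (0:ℝ) < 1 + F k t := by have := hF0 k t; linarith
    have h2 : 1 / (1 + F k t) ≤ 1 := by
      rw [div_le_one h1]; have := hF0 k t; linarith
    calc term t k ≤ (1/2)^k * 1 := mul_le_mul_of_nonneg_left h2 (by positivity)
      _ = (1/2)^k := mul_one _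
  have hsum : ∀ t, Summable (term t) :=
    fun t => Summable.of_nonneg_of_le (fun k => (htermpos t k).le) (fun k => htermle t k)
      summable_geometric_two
  set f : ℝ → ℝ := fun t => ∑' k, term t k with hf
  -- monotonicity of f
  have htermmono : ∀ s t : ℝ, s ∈ Set.Icc (0:ℝ) 1 → s ≤ t → ∀ k, term s k ≤ term t k := by
    intro s t hs hst k
    have hFst := hFanti k s t hs hst
    have h1 : (0:ℝ) < 1 + F k t := by have := hF0 k t; linarith
    have h2 : 1 / (1 + F k s) ≤ 1 / (1 + F k t) :=
      one_div_le_one_div_of_le h1 (by linarith)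
    exact mul_le_mul_of_nonneg_left h2 (by positivity)
  have hfmono : ∀ s t : ℝ, s ∈ Set.Icc (0:ℝ) 1 → s ≤ t → f s ≤ f t :=
    fun s t hs hst => Summable.tsum_le_tsum (htermmono s t hs hst) (hsum s) (hsum t)
  -- f is constant on fibers of ζ
  have hfeq : ∀ s t : ℝ, s ∈ Set.Icc (0:ℝ) 1 → t ∈ Set.Icc (0:ℝ) 1 → ζ s = ζ t → f s = f t := by
    have main : ∀ s t : ℝ, s ∈ Set.Icc (0:ℝ) 1 → t ∈ Set.Icc (0:ℝ) 1 → s ≤ t → ζ s = ζ t →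
        f s = f t := by
      intro s t hs ht hst he
      have himgeq := himg s t hs ht hst he
      exact tsum_congr fun k => by simp only [hterm, hF, himgeq]
    intro s t hs ht he
    rcases le_total s t with h | h
    · exact main s t hs ht h he
    · exact (main t s ht hs h he.symm).symm
  -- key strict monotonicity
  have key : ∀ s t : ℝ, s ∈ Set.Icc (0:ℝ) 1 → t ∈ Set.Icc (0:ℝ) 1 → s < t → ζ s ≠ ζ t →
      f s < f t := by
    intro s t hs ht hst hnest
    have hsubI : Set.Icc s t ⊆ Set.Icc (0:ℝ) 1 := Icc_subset_Icc hs.1 ht.2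
    have hcst : ContinuousOn ζ (Set.Icc s t) := hcont.mono hsubI
    -- find a point of the middle with a new value
    have hAcl : IsClosed (Set.Icc s t ∩ ζ ⁻¹' {ζ s}) :=
      hcst.preimage_isClosed_of_isClosed isClosed_Icc isClosed_singleton
    have hBcl : IsClosed (Set.Icc s t ∩ ζ ⁻¹' {ζ t}) :=
      hcst.preimage_isClosed_of_isClosed isClosed_Icc isClosed_singleton
    obtain ⟨x, hxI, hxB, hxA⟩ := isPreconnected_Icc (a := s) (b := t)
      (Set.Icc s t ∩ ζ ⁻¹' {ζ t})ᶜ (Set.Icc s t ∩ ζ ⁻¹' {ζ s})ᶜ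
      hBcl.isOpen_compl hAcl.isOpen_compl
      (by
        intro u hu
        by_cases h : ζ u = ζ t
        · right
          simp only [mem_compl_iff, mem_inter_iff, mem_preimage, mem_singleton_iff, not_and]
          intro _ h2
          exact hnest (h2.symm.trans h)
        · left
          simp only [mem_compl_iff, mem_inter_iff, mem_preimage, mem_singleton_iff, not_and]
          exact fun _ => h)
      ⟨s, ⟨le_refl s, hst.le⟩, by
        simp only [mem_compl_iff, mem_inter_iff, mem_preimage, mem_singleton_iff, not_and]
        exact fun _ h => hnest h⟩
      ⟨t, ⟨hst.le, le_refl t⟩, by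
        simp only [mem_compl_iff, mem_inter_iff, mem_preimage, mem_singleton_iff, not_and]
        exact fun _ h => hnest h.symm⟩
    simp only [mem_compl_iff, mem_inter_iff, mem_preimage, mem_singleton_iff, not_and] at hxB hxA
    have hxt : ζ x ≠ ζ t := hxB hxI
    have hxs : ζ x ≠ ζ s := hxA hxI
    have hxI1 : x ∈ Set.Icc (0:ℝ) 1 := hsubI hxI
    -- ζ x is not a value taken before s or after t
    have hnotin : ζ x ∉ ζ '' (Set.Icc 0 s ∪ Set.Icc t 1) := by
      rintro ⟨v, hv | hv, hvx⟩
      · have hvI : v ∈ Set.Icc (0:ℝ) 1 := ⟨hv.1, hv.2.trans hs.2⟩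
        exact hxs ((hpre v x s hvI hxI1 hv.2 hxI.1 hvx).trans hvx).symm
      · have hvI : v ∈ Set.Icc (0:ℝ) 1 := ⟨ht.1.trans hv.1, hv.2⟩
        exact hxt (hpre x v t hxI1 hvI hxI.2 hv.1 hvx.symm).symm
    -- positive distance to that compact set
    have hEScmp : IsCompact (ζ '' (Set.Icc 0 s ∪ Set.Icc t 1)) := by
      rw [image_union]
      exact (hcmp s hs).union
        (isCompact_Icc.image_of_continuousOn (hcont.mono (Icc_subset_Icc ht.1 (le_refl 1))))
    have hESne : (ζ '' (Set.Icc 0 s ∪ Set.Icc t 1)).Nonempty :=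
      ⟨ζ 0, 0, Or.inl ⟨le_refl 0, hs.1⟩, rfl⟩
    set ε := infDist (ζ x) (ζ '' (Set.Icc 0 s ∪ Set.Icc t 1)) with hεdef
    have hεpos : 0 < ε :=
      (hEScmp.isClosed.notMem_iff_infDist_pos hESne).mp hnotin
    -- pick a dense point close to x
    obtain ⟨δ, hδpos, hδ⟩ := (Metric.continuousWithinAt_iff.mp (hcont x hxI1)) (ε/2)
      (by linarith)
    obtain ⟨k, hk⟩ := Metric.denseRange_iff.mp hq ⟨x, hxI1⟩ δ hδpos
    have hkx : dist ((q k : ℝ)) x < δ := by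
      rw [Subtype.dist_eq] at hk
      rw [dist_comm]
      exact hk
    have hζk : dist (ζ (q k : ℝ)) (ζ x) < ε/2 := hδ (q k).2 hkx
    -- F k t is small, F k s is large
    have hFt : F k t < ε/2 := by
      have hmem : ζ x ∈ ζ '' Set.Icc 0 t := ⟨x, ⟨hxI1.1, hxI.2⟩, rfl⟩
      calc F k t ≤ dist (ζ (q k : ℝ)) (ζ x) := infDist_le_dist_of_mem hmem
        _ < ε/2 := hζk
    have hFs : ε/2 ≤ F k s := by
      obtain ⟨y, hy, hFy⟩ := (hcmp s hs).exists_infDist_eq_dist (hne s hs) (ζ (q k : ℝ))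
      have hyES : y ∈ ζ '' (Set.Icc 0 s ∪ Set.Icc t 1) := by
        obtain ⟨u, hu, rfl⟩ := hy
        exact ⟨u, Or.inl hu, rfl⟩
      have h1 : ε ≤ dist (ζ x) y := infDist_le_dist_of_mem hyES
      have h2 : dist (ζ x) y ≤ dist (ζ x) (ζ (q k : ℝ)) + dist (ζ (q k : ℝ)) y :=
        dist_triangle _ _ _
      have h3 : dist (ζ x) (ζ (q k : ℝ)) < ε/2 := by rwa [dist_comm] at hζk
      have hFy' : F k s = dist (ζ (q k : ℝ)) y := hFy
      rw [hFy']
      linarith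
    -- strict inequality of the k-th term
    have hterm_strict : term s k < term t k := by
      have hFts : F k t < F k s := lt_of_lt_of_le hFt hFs
      have h1 : (0:ℝ) < 1 + F k t := by have := hF0 k t; linarith
      have h2 : 1 / (1 + F k s) < 1 / (1 + F k t) :=
        one_div_lt_one_div_of_lt h1 (by linarith)
      exact mul_lt_mul_of_pos_left h2 (by positivity)
    exact Summable.tsum_lt_tsum (htermmono s t hs hst.le) hterm_strict (hsum s) (hsum t)
  -- ζ is determined by f
  have hζinj : ∀ s t : ℝ, s ∈ Set.Icc (0:ℝ) 1 → t ∈ Set.Icc (0:ℝ) 1 → f s = f t → ζ s = ζ t := by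
    intro s t hs ht hfe
    rcases lt_trichotomy s t with h | h | h
    · by_contra hne'
      exact absurd hfe (ne_of_lt (key s t hs ht h hne'))
    · rw [h]
    · by_contra hne'
      exact absurd hfe.symm (ne_of_lt (key t s ht hs h (Ne.symm hne')))
  -- continuity of f
  have huc := Metric.uniformContinuousOn_iff.mp
    (isCompact_Icc.uniformContinuousOn_of_continuous hcont)
  have hFdiff : ∀ k (s t : ℝ), s ∈ Set.Icc (0:ℝ) 1 → t ∈ Set.Icc (0:ℝ) 1 → s ≤ t →
      ∀ ω : ℝ, (∀ u ∈ Set.Icc s t, dist (ζ u) (ζ s) ≤ ω) → F k s ≤ F k t + ω := by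
    intro k s t hs ht hst ω hbound
    have hω : 0 ≤ ω := le_trans dist_nonneg (hbound s ⟨le_refl s, hst⟩)
    obtain ⟨y, hy, hFy⟩ := (hcmp t ht).exists_infDist_eq_dist (hne t ht) (ζ (q k : ℝ))
    obtain ⟨u, hu, rfl⟩ := hy
    have hFy' : F k t = dist (ζ (q k : ℝ)) (ζ u) := hFy
    rcases le_or_gt u s with h | h
    · have h1 : F k s ≤ dist (ζ (q k : ℝ)) (ζ u) := infDist_le_dist_of_mem ⟨u, ⟨hu.1, h⟩, rfl⟩
      rw [hFy']; linarith
    · have h2 : F k s ≤ dist (ζ (q k : ℝ)) (ζ s) :=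
        infDist_le_dist_of_mem ⟨s, ⟨hs.1, le_refl s⟩, rfl⟩
      have h3 : dist (ζ (q k : ℝ)) (ζ s) ≤ dist (ζ (q k : ℝ)) (ζ u) + dist (ζ u) (ζ s) :=
        dist_triangle _ _ _
      have h4 : dist (ζ u) (ζ s) ≤ ω := hbound u ⟨h.le, hu.2⟩
      rw [hFy']; linarith
  have hfcont : ContinuousOn f (Set.Icc 0 1) := by
    rw [Metric.continuousOn_iff]
    have hsym : ∀ ε : ℝ, 0 < ε → ∀ δ : ℝ, 0 < δ →
        (∀ x ∈ Set.Icc (0:ℝ) 1, ∀ y ∈ Set.Icc (0:ℝ) 1, dist x y < δ → dist (ζ x) (ζ y) < ε/8) →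
        ∀ s t : ℝ, s ∈ Set.Icc (0:ℝ) 1 → t ∈ Set.Icc (0:ℝ) 1 → s ≤ t → dist s t < δ →
        dist (f s) (f t) < ε := by
      intro ε hε δ hδpos hδ s t hs ht hst hd
      have hbound : ∀ u ∈ Set.Icc s t, dist (ζ u) (ζ s) ≤ ε/8 := by
        intro u hu
        have huI : u ∈ Set.Icc (0:ℝ) 1 := ⟨hs.1.trans hu.1, hu.2.trans ht.2⟩
        have : dist u s < δ := by
          rw [Real.dist_eq] at hd ⊢
          rw [abs_of_nonneg (sub_nonneg.mpr hu.1)]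
          rw [abs_of_nonpos (sub_nonpos.mpr hst)] at hd
          linarith [hu.2]
        exact (hδ u huI s hs this).le
      have hterm_bound : ∀ k, |term s k - term t k| ≤ (1/2)^k * (ε/8) := by
        intro k
        have hF1 : F k t ≤ F k s := hFanti k s t hs hst
        have hF2 : F k s ≤ F k t + ε/8 := hFdiff k s t hs ht hst (ε/8) hbound
        have habs : |F k s - F k t| ≤ ε/8 := by
          rw [abs_of_nonneg (by linarith)]; linarith
        have h1 : |1 / (1 + F k s) - 1 / (1 + F k t)| ≤ |F k s - F k t| :=
          one_div_one_add_abs_le (hF0 k s) (hF0 k t)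
        have h2 : term s k - term t k = (1/2)^k * (1 / (1 + F k s) - 1 / (1 + F k t)) := by
          simp only [hterm]; ring
        rw [h2, abs_mul, abs_of_nonneg (show (0:ℝ) ≤ (1/2)^k by positivity)]
        exact mul_le_mul_of_nonneg_left (h1.trans habs) (by positivity)
      have hdiff : f s - f t = ∑' k, (term s k - term t k) :=
        (Summable.tsum_sub (hsum s) (hsum t)).symm
      have hs2 := summable_geometric_two.hasSum.mul_right (ε/8)
      rw [tsum_geometric_two] at hs2
      have hnorm : ‖∑' k, (term s k - term t k)‖ ≤ 2 * (ε/8) :=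
        tsum_of_norm_bounded hs2 (fun k => by
          rw [Real.norm_eq_abs]; exact hterm_bound k)
      rw [← hdiff, Real.norm_eq_abs] at hnorm
      rw [Real.dist_eq]
      calc |f s - f t| ≤ 2 * (ε/8) := hnorm
        _ < ε := by linarith
    intro b hb ε hε
    obtain ⟨δ, hδpos, hδ⟩ := huc (ε/8) (by linarith)
    refine ⟨δ, hδpos, ?_⟩
    intro a ha hab
    rcases le_total a b with h | h
    · exact hsym ε hε δ hδpos hδ a b ha hb h hab
    · rw [dist_comm]
      exact hsym ε hε δ hδpos hδ b a hb ha h (by rwa [dist_comm] at hab)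
  -- normalization
  have hc : 0 < f 1 - f 0 := sub_pos.mpr (key 0 1 h01 h11 zero_lt_one hζ01)
  set g : ℝ → ℝ := fun t => (f t - f 0) / (f 1 - f 0) with hg
  have hgf : ∀ s t : ℝ, g s = g t ↔ f s = f t := by
    intro s t
    constructor
    · intro h
      simp only [hg] at h
      rw [div_eq_div_iff hc.ne' hc.ne'] at h
      have := mul_right_cancel₀ hc.ne' h
      linarith
    · intro h; simp only [hg, h]
  have hgc : ContinuousOn g (Set.Icc 0 1) := (hfcont.sub continuousOn_const).div_const _
  have hg0 : g 0 = 0 := by simp [hg]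
  have hg1 : g 1 = 1 := by simp only [hg]; exact div_self hc.ne'
  have hgmem : ∀ t : ℝ, t ∈ Set.Icc (0:ℝ) 1 → g t ∈ Set.Icc (0:ℝ) 1 := by
    intro t ht
    have h1 : f 0 ≤ f t := hfmono 0 t h01 ht.1
    have h2 : f t ≤ f 1 := hfmono t 1 ht ht.2
    constructor
    · exact div_nonneg (by linarith) hc.le
    · rw [div_le_one hc]; linarith
  have hsurj : Set.Icc (0:ℝ) 1 ⊆ g '' Set.Icc 0 1 := by
    have h := intermediate_value_Icc (zero_le_one) hgc
    rw [hg0, hg1] at h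
    exact h
  -- the selection function
  set σ : ℝ → ℝ := fun x => sInf (Set.Icc (0:ℝ) 1 ∩ g ⁻¹' {x}) with hσdef
  have hσ : ∀ x : ℝ, x ∈ Set.Icc (0:ℝ) 1 → σ x ∈ Set.Icc (0:ℝ) 1 ∧ g (σ x) = x := by
    intro x hx
    have hclosed : IsClosed (Set.Icc (0:ℝ) 1 ∩ g ⁻¹' {x}) :=
      hgc.preimage_isClosed_of_isClosed isClosed_Icc isClosed_singleton
    have hnonempty : (Set.Icc (0:ℝ) 1 ∩ g ⁻¹' {x}).Nonempty := by
      obtain ⟨t, htI, ht⟩ := hsurj hx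
      exact ⟨t, htI, by simp [ht]⟩
    have hbdd : BddBelow (Set.Icc (0:ℝ) 1 ∩ g ⁻¹' {x}) :=
      ⟨0, fun y hy => hy.1.1⟩
    have hmem := hclosed.csInf_mem hnonempty hbdd
    exact ⟨hmem.1, hmem.2⟩
  -- the uniform-continuity claim
  have claimC : ∀ ε : ℝ, 0 < ε → ∃ δ : ℝ, 0 < δ ∧ ∀ s ∈ Set.Icc (0:ℝ) 1, ∀ t ∈ Set.Icc (0:ℝ) 1,
      |g s - g t| < δ → dist (ζ s) (ζ t) < ε := by
    intro ε hε
    set W := (Set.Icc (0:ℝ) 1 ×ˢ Set.Icc (0:ℝ) 1) ∩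
      (fun p : ℝ × ℝ => dist (ζ p.1) (ζ p.2)) ⁻¹' (Ici ε) with hW
    have hdistcont : ContinuousOn (fun p : ℝ × ℝ => dist (ζ p.1) (ζ p.2))
        (Set.Icc (0:ℝ) 1 ×ˢ Set.Icc (0:ℝ) 1) := by
      exact continuous_dist.comp_continuousOn
        ((hcont.comp continuousOn_fst (fun p hp => hp.1)).prodMk
          (hcont.comp continuousOn_snd (fun p hp => hp.2)))
    have hWclosed : IsClosed W :=
      hdistcont.preimage_isClosed_of_isClosed (isClosed_Icc.prod isClosed_Icc) isClosed_Ici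
    rcases eq_empty_or_nonempty W with hWe | hWne
    · refine ⟨1, one_pos, ?_⟩
      intro s hs t ht _
      by_contra hge
      push_neg at hge
      have : (s, t) ∈ W := ⟨⟨hs, ht⟩, hge⟩
      rw [hWe] at this
      exact this
    · have hWcmp : IsCompact W :=
        (isCompact_Icc.prod isCompact_Icc).of_isClosed_subset hWclosed inter_subset_left
      have hφ : ContinuousOn (fun p : ℝ × ℝ => |g p.1 - g p.2|) W :=
        (((hgc.comp continuousOn_fst (fun p hp => hp.1.1)).sub
          (hgc.comp continuousOn_snd (fun p hp => hp.1.2)))).abs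
      obtain ⟨p₀, hp₀, hmin⟩ := hWcmp.exists_isMinOn hWne hφ
      have hδpos : 0 < |g p₀.1 - g p₀.2| := by
        rw [abs_pos, sub_ne_zero]
        intro hgeq
        have hfe : f p₀.1 = f p₀.2 := (hgf _ _).mp hgeq
        have hζe : ζ p₀.1 = ζ p₀.2 := hζinj _ _ hp₀.1.1 hp₀.1.2 hfe
        have hd : ε ≤ dist (ζ p₀.1) (ζ p₀.2) := hp₀.2
        rw [hζe, dist_self] at hd
        linarith
      refine ⟨_, hδpos, ?_⟩
      intro s hs t ht hlt
      by_contra hge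
      push_neg at hge
      have hmem : (s, t) ∈ W := ⟨⟨hs, ht⟩, hge⟩
      exact absurd hlt (not_lt.mpr (isMinOn_iff.mp hmin (s, t) hmem))
  -- assemble the final curve
  refine ⟨fun x => ζ (σ x), ?_, ?_, ?_⟩
  · -- continuity
    rw [Metric.continuousOn_iff]
    intro b hb ε hε
    obtain ⟨δ, hδpos, hδ⟩ := claimC ε hε
    refine ⟨δ, hδpos, ?_⟩
    intro a ha hab
    have hσa := hσ a ha
    have hσb := hσ b hb
    apply hδ _ hσa.1 _ hσb.1
    rw [hσa.2, hσb.2]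
    rwa [Real.dist_eq] at hab
  · -- injectivity
    intro x hx y hy hxy
    have hσx := hσ x hx
    have hσy := hσ y hy
    have hfe : f (σ x) = f (σ y) := hfeq _ _ hσx.1 hσy.1 hxy
    have := (hgf _ _).mpr hfe
    rw [hσx.2, hσy.2] at this
    exact this
  · -- image equality
    apply Subset.antisymm
    · rintro _ ⟨x, hx, rfl⟩
      exact ⟨σ x, (hσ x hx).1, rfl⟩
    · rintro _ ⟨t, ht, rfl⟩
      have hgt : g t ∈ Set.Icc (0:ℝ) 1 := hgmem t ht
      refine ⟨g t, hgt, ?_⟩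
      have h1 := hσ (g t) hgt
      have hfe : f (σ (g t)) = f t := (hgf _ _).mp h1.2
      exact hζinj _ _ h1.1 ht hfe
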